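/- The sum of Euler's totient function, ∑_{k=1}^{n} φ(k), is asymptotically equivalent to (3/π²)·n² as n → ∞. -/

import Mathlib

open Filter Finset ArithmeticFunction
open scoped ArithmeticFunction.Moebius

lemma tot_inv : ∀ n > 0, (∑ x ∈ n.divisorsAntidiagonal, (μ x.1 : ℝ) * (x.2 : ℝ)) = (Nat.totient n : ℝ) := by
  have := (ArithmeticFunction.sum_eq_iff_sum_mul_moebius_eq
    (R := ℝ) (f := fun k => (Nat.totient k : ℝ)) (g := fun k => (k : ℝ))).mp
  exact this fun n hn => by exact_mod_cast congrArg (Nat.cast : ℕ → ℝ) (Nat.sum_totient n)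

lemma swap_sum (n : ℕ) (F : ℕ → ℕ → ℝ) :
    ∑ k ∈ Icc 1 n, ∑ p ∈ k.divisorsAntidiagonal, F p.1 p.2
      = ∑ d ∈ Icc 1 n, ∑ m ∈ Icc 1 (n / d), F d m := by
  rw [Finset.sum_sigma', Finset.sum_sigma']
  refine Finset.sum_nbij' (fun x => ⟨x.2.1, x.2.2⟩) (fun x => ⟨x.1 * x.2, (x.1, x.2)⟩)
    ?_ ?_ ?_ ?_ ?_
  · rintro ⟨k, d, m⟩ h
    simp only [Finset.mem_sigma, Finset.mem_Icc, Nat.mem_divisorsAntidiagonal] at h ⊢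
    obtain ⟨⟨hk1, hk2⟩, hdm, hk0⟩ := h
    have hd : 0 < d := Nat.pos_of_ne_zero (by rintro rfl; simp at hdm; omega)
    have hm : 0 < m := Nat.pos_of_ne_zero (by rintro rfl; simp at hdm; omega)
    refine ⟨⟨hd, le_trans (le_trans (Nat.le_mul_of_pos_right d hm) hdm.le) hk2⟩, hm,
      (Nat.le_div_iff_mul_le hd).mpr (by rw [mul_comm]; omega)⟩
  · rintro ⟨d, m⟩ h
    dsimp only
    simp only [Finset.mem_sigma, Finset.mem_Icc] at h
    obtain ⟨⟨hd1, hd2⟩, hm1, hm2⟩ := h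
    have hmd := (Nat.le_div_iff_mul_le (by omega : 0 < d)).mp hm2
    refine Finset.mem_sigma.mpr ⟨Finset.mem_Icc.mpr ⟨?_, by show d * m ≤ n; rw [mul_comm] at hmd; omega⟩,
      Nat.mem_divisorsAntidiagonal.mpr ⟨rfl, ?_⟩⟩
    · exact Nat.one_le_iff_ne_zero.mpr (by positivity)
    · positivity
  · rintro ⟨k, d, m⟩ h
    simp only [Finset.mem_sigma, Finset.mem_Icc, Nat.mem_divisorsAntidiagonal] at h
    simp [h.2.1]
  · rintro ⟨d, m⟩ h; rfl
  · rintro ⟨k, d, m⟩ h; rfl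

lemma gauss (q : ℕ) : ∑ m ∈ Icc 1 q, (m : ℝ) = q * (q + 1) / 2 := by
  induction q with
  | zero => simp
  | succ q ih =>
    rw [Finset.sum_Icc_succ_top (by omega), ih]
    push_cast; ring

lemma key (n : ℕ) : ((∑ k ∈ Icc 1 n, Nat.totient k : ℕ) : ℝ)
    = ∑ d ∈ Icc 1 n, (μ d : ℝ) * (((n / d : ℕ) : ℝ) * (((n / d : ℕ) : ℝ) + 1) / 2) := by
  push_cast
  calc ∑ k ∈ Icc 1 n, (Nat.totient k : ℝ)
      = ∑ k ∈ Icc 1 n, ∑ p ∈ k.divisorsAntidiagonal, (μ p.1 : ℝ) * (p.2 : ℝ) := by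
        refine Finset.sum_congr rfl fun k hk => ?_
        exact (tot_inv k (by simp only [Finset.mem_Icc] at hk; omega)).symm
    _ = ∑ d ∈ Icc 1 n, ∑ m ∈ Icc 1 (n / d), (μ d : ℝ) * (m : ℝ) :=
        swap_sum n (fun d m => (μ d : ℝ) * (m : ℝ))
    _ = _ := by
        refine Finset.sum_congr rfl fun d _ => ?_
        rw [← Finset.mul_sum, gauss]

noncomputable def FF (n d : ℕ) : ℝ :=
  (μ d : ℝ) * (((n / d : ℕ) : ℝ) * (((n / d : ℕ) : ℝ) + 1) / 2) / (n : ℝ) ^ 2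

lemma FF_eq (n : ℕ) :
    ((∑ k ∈ Icc 1 n, Nat.totient k : ℕ) : ℝ) / (n : ℝ) ^ 2 = ∑' d, FF n d := by
  rw [key, Finset.sum_div]
  refine (tsum_eq_sum fun d hd => ?_).symm
  simp only [Finset.mem_Icc, not_and_or, not_le] at hd
  rcases hd with hd | hd
  · interval_cases d; simp [FF]
  · have : n / d = 0 := Nat.div_eq_of_lt hd
    simp [FF, this]

lemma moebius_tsum : ∑' d : ℕ, (μ d : ℝ) / (d : ℝ) ^ 2 = 6 / Real.pi ^ 2 := by
  have h2 : (1 : ℝ) < (2 : ℂ).re := by norm_num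
  have h1 := ArithmeticFunction.LSeries_zeta_mul_Lseries_moebius h2
  rw [ArithmeticFunction.LSeries_zeta_eq_riemannZeta h2, riemannZeta_two] at h1
  have hπ : (Real.pi : ℂ) ≠ 0 := by exact_mod_cast Real.pi_ne_zero
  have hμ : LSeries (fun n => (μ n : ℂ)) 2 = 6 / (Real.pi : ℂ) ^ 2 := by
    field_simp at h1 ⊢
    linear_combination h1
  have hterm : ∀ n : ℕ, LSeries.term (fun n => (μ n : ℂ)) 2 n = (((μ n : ℝ) / (n : ℝ) ^ 2 : ℝ) : ℂ) := by
    intro n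
    rcases eq_or_ne n 0 with rfl | hn
    · simp [LSeries.term]
    · rw [LSeries.term_of_ne_zero hn, show (2 : ℂ) = ((2 : ℕ) : ℂ) by norm_num,
        Complex.cpow_natCast]
      push_cast
      ring
  have := hμ
  rw [LSeries, tsum_congr hterm, ← Complex.ofReal_tsum] at this
  have h6 : ((6 / Real.pi ^ 2 : ℝ) : ℂ) = 6 / (Real.pi : ℂ) ^ 2 := by push_cast; ring
  exact_mod_cast this.trans h6.symm

lemma tendsto_ratio (d : ℕ) (hd : 0 < d) :
    Tendsto (fun n : ℕ => ((n / d : ℕ) : ℝ) / n) atTop (nhds (1 / d)) := by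
  have hdr : (0 : ℝ) < d := by exact_mod_cast hd
  refine tendsto_of_tendsto_of_tendsto_of_le_of_le'
    (g := fun n : ℕ => 1 / (d : ℝ) - 1 / n) (h := fun _ : ℕ => 1 / (d : ℝ))
    (by simpa using tendsto_const_nhds.sub (tendsto_one_div_atTop_nhds_zero_nat (𝕜 := ℝ)))
    tendsto_const_nhds ?_ ?_
  · filter_upwards [eventually_ge_atTop 1] with n hn
    have hnr : (0 : ℝ) < n := by exact_mod_cast hn
    have h := Nat.lt_mul_div_succ n hd
    have h' : (n : ℝ) < d * (((n / d : ℕ) : ℝ) + 1) := by exact_mod_cast h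
    rw [div_sub_div _ _ (ne_of_gt hdr) (ne_of_gt hnr), div_le_div_iff₀ (by positivity) hnr]
    nlinarith
  · filter_upwards [eventually_ge_atTop 1] with n hn
    have hnr : (0 : ℝ) < n := by exact_mod_cast hn
    have h : ((n / d : ℕ) : ℝ) ≤ (n : ℝ) / d := Nat.cast_div_le
    rw [div_le_div_iff₀ hnr hdr]
    have h2 : (n : ℝ) / d * d = n := div_mul_cancel₀ _ (ne_of_gt hdr)
    nlinarith [mul_le_mul_of_nonneg_right h hdr.le]

lemma tendsto_FF (d : ℕ) :
    Tendsto (fun n => FF n d) atTop (nhds ((μ d : ℝ) / (2 * (d : ℝ) ^ 2))) := by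
  rcases Nat.eq_zero_or_pos d with rfl | hd
  · simpa [FF] using tendsto_const_nhds
  have hdr : (0 : ℝ) < d := by exact_mod_cast hd
  have ha := tendsto_ratio d hd
  have hb : Tendsto (fun n : ℕ => (((n / d : ℕ) : ℝ) + 1) / n) atTop (nhds (1 / d)) := by
    have := ha.add tendsto_one_div_atTop_nhds_zero_nat
    simp only [add_zero] at this
    refine this.congr' ?_
    filter_upwards [eventually_ge_atTop 1] with n hn
    have hnr : ((n : ℝ)) ≠ 0 := by positivity
    field_simp
  have hc : Tendsto (fun n : ℕ => (μ d : ℝ) * ((((n / d : ℕ) : ℝ) / n)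
      * ((((n / d : ℕ) : ℝ) + 1) / n) / 2)) atTop
      (nhds ((μ d : ℝ) * ((1 / d) * (1 / d) / 2))) :=
    tendsto_const_nhds.mul ((ha.mul hb).div_const 2)
  have heq : (μ d : ℝ) * ((1 / (d : ℝ)) * (1 / d) / 2) = (μ d : ℝ) / (2 * (d : ℝ) ^ 2) := by
    rw [div_mul_div_comm, one_mul, ← pow_two, div_div, mul_one_div,
      mul_comm ((d : ℝ) ^ 2) 2]
  rw [heq] at hc
  refine hc.congr' ?_
  filter_upwards [eventually_ge_atTop 1] with n hn
  have hnr : ((n : ℝ)) ≠ 0 := by positivity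
  have hid : (((n / d : ℕ) : ℝ) / n) * ((((n / d : ℕ) : ℝ) + 1) / n) / 2
      = (((n / d : ℕ) : ℝ) * (((n / d : ℕ) : ℝ) + 1) / 2) / (n : ℝ) ^ 2 := by
    rw [div_mul_div_comm, ← pow_two, div_div, div_right_comm, mul_comm ((n : ℝ) ^ 2) 2,
      ← div_div, div_right_comm]
  simp only [FF, hid, mul_div_assoc]

lemma FF_bound {n : ℕ} (hn : 1 ≤ n) (d : ℕ) : ‖FF n d‖ ≤ 1 / (d : ℝ) ^ 2 := by
  rcases Nat.eq_zero_or_pos d with rfl | hd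
  · simp [FF]
  have hnr : (0 : ℝ) < n := by exact_mod_cast hn
  have hdr : (0 : ℝ) < d := by exact_mod_cast hd
  rcases Nat.eq_zero_or_pos (n / d) with hq | hq
  · rw [FF, hq]
    simp only [Nat.cast_zero, zero_mul, zero_div, mul_zero, norm_zero]
    positivity
  have hq1 : (1 : ℝ) ≤ ((n / d : ℕ) : ℝ) := by exact_mod_cast hq
  have hqd : ((n / d : ℕ) : ℝ) * d ≤ n := by exact_mod_cast Nat.div_mul_le_self n d
  have habs : |(μ d : ℝ)| ≤ 1 := by exact_mod_cast ArithmeticFunction.abs_moebius_le_one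
  rw [FF, Real.norm_eq_abs, abs_div, abs_mul,
    abs_of_nonneg (by positivity : (0:ℝ) ≤ ((n / d : ℕ) : ℝ) * (((n / d : ℕ) : ℝ) + 1) / 2),
    abs_of_nonneg (by positivity : (0:ℝ) ≤ (n : ℝ) ^ 2),
    div_le_div_iff₀ (by positivity) (by positivity)]
  nlinarith [mul_le_mul hqd hqd (by positivity) hnr.le,
    mul_le_mul_of_nonneg_right (mul_le_mul_of_nonneg_left
      (show ((n / d : ℕ) : ℝ) + 1 ≤ 2 * ((n / d : ℕ) : ℝ) by linarith)
      (by positivity : (0:ℝ) ≤ ((n / d : ℕ) : ℝ))) (by positivity : (0:ℝ) ≤ (d : ℝ) ^ 2),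
    mul_le_mul_of_nonneg_right habs
      (by positivity : (0:ℝ) ≤ ((n / d : ℕ) : ℝ) * (((n / d : ℕ) : ℝ) + 1) / 2 * (d : ℝ) ^ 2)]

theorem totient_sum_asymptotic :
    Tendsto (fun n : ℕ =>
      ((∑ k ∈ Finset.Icc 1 n, Nat.totient k : ℕ) : ℝ) / (n : ℝ) ^ 2)
      atTop (nhds (3 / Real.pi ^ 2)) := by
  have hg : ∑' d : ℕ, (μ d : ℝ) / (2 * (d : ℝ) ^ 2) = 3 / Real.pi ^ 2 := by
    have hfun : (fun d : ℕ => (μ d : ℝ) / (2 * (d : ℝ) ^ 2))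
        = fun d : ℕ => ((μ d : ℝ) / (d : ℝ) ^ 2) / 2 := by
      funext d; rw [div_div, mul_comm]
    rw [hfun, tsum_div_const, moebius_tsum, div_right_comm]
    norm_num
  have h := tendsto_tsum_of_dominated_convergence
    (f := FF) (g := fun d : ℕ => (μ d : ℝ) / (2 * (d : ℝ) ^ 2))
    (bound := fun d : ℕ => 1 / (d : ℝ) ^ 2)
    (Real.summable_one_div_nat_pow.mpr one_lt_two) tendsto_FF ?_
  · rw [hg] at h
    exact h.congr fun n => (FF_eq n).symm
  · filter_upwards [eventually_ge_atTop 1] with n hn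
    exact FF_bound hn
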